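/- Let n and k be positive integers and let σ be any permutation of Fin n. Then the number of fixed points of σ^{⊙k} equals ∑ ∏_{ℓ=1}^{n} multichoose (C_ℓ(σ)) (s_ℓ), where the sum ranges over all tuples (s_1, …, s_n) of natural numbers satisfying s_1 + 2 s_2 + ⋯ + n s_n = k, and C_ℓ(σ) is the number of cycles of length ℓ in the cycle decomposition of σ. -/

import Mathlib

/-- The `k`-th symmetric tensor power of a permutation `σ` of `Fin n`: the permutation of
`Sym (Fin n) k` sending a multiset `m` to `Sym.map σ m`. -/
def Equiv.Perm.symPow {n : ℕ} (σ : Equiv.Perm (Fin n)) (k : ℕ) :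
    Equiv.Perm (Sym (Fin n) k) :=
  (Sym.equivCongr σ : Sym (Fin n) k ≃ Sym (Fin n) k)

/-- The number of fixed points of a permutation of a finite type. -/
def fixCount {α : Type*} [Fintype α] [DecidableEq α] (τ : Equiv.Perm α) : ℕ :=
  Fintype.card {x : α // τ x = x}

/-- `cycleCount τ s` is the number of cycles of length `s` in the cycle decomposition of `τ`;
for `s = 1` this is the number of fixed points. -/
def cycleCount {α : Type*} [Fintype α] [DecidableEq α] (τ : Equiv.Perm α) (s : ℕ) : ℕ :=
  if s = 1 then fixCount τ
  else (τ.cycleFactorsFinset.filter (fun c => c.support.card = s)).card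

open Finset Multiset Equiv Equiv.Perm

set_option linter.unusedSectionVars false

namespace SymPowAux

variable {α : Type*} [Fintype α] [DecidableEq α]

/-! ### Multisets vs. count functions -/

/-- The multiset associated to a multiplicity function. -/
def toMul (f : α → ℕ) : Multiset α := ∑ x : α, Multiset.replicate (f x) x

lemma card_toMul (f : α → ℕ) : Multiset.card (toMul f) = ∑ x : α, f x := by
  rw [toMul, Multiset.card_sum]
  simp

lemma count_toMul (f : α → ℕ) (x : α) : Multiset.count x (toMul f) = f x := by
  rw [toMul, Multiset.count_sum']
  simp [Multiset.count_replicate, eq_comm]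

lemma sum_count (m : Multiset α) : ∑ x : α, Multiset.count x m = Multiset.card m := by
  rw [← Finset.sum_subset (Finset.subset_univ m.toFinset)
      (fun x _ hx => by
        simp only [Multiset.mem_toFinset] at hx
        simp [Multiset.count_eq_zero_of_notMem hx])]
  rw [Multiset.toFinset_sum_count_eq]

lemma toMul_count (m : Multiset α) : toMul (fun x => Multiset.count x m) = m := by
  classical
  rw [toMul]
  rw [← Finset.sum_subset (Finset.subset_univ m.toFinset)
      (fun x _ hx => by
        simp only [Multiset.mem_toFinset] at hx
        simp [Multiset.count_eq_zero_of_notMem hx])]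
  simpa [← Multiset.nsmul_singleton] using Multiset.toFinset_sum_count_nsmul_eq m

/-- Multiplicity functions with total `m` are in bijection with `Sym α m`. -/
def funSymEquiv (m : ℕ) : {f : α → ℕ // ∑ x : α, f x = m} ≃ Sym α m where
  toFun f := ⟨toMul f.1, by rw [card_toMul, f.2]⟩
  invFun s := ⟨fun x => Multiset.count x s.1, by rw [sum_count, s.2]⟩
  left_inv f := Subtype.ext <| funext fun x => count_toMul f.1 x
  right_inv s := Subtype.ext <| toMul_count s.1

lemma natCard_sum_eq (m : ℕ) :
    Nat.card {f : α → ℕ // ∑ x : α, f x = m} = Nat.multichoose (Fintype.card α) m := by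
  rw [Nat.card_congr (funSymEquiv m), Nat.card_eq_fintype_card,
    Sym.card_sym_eq_multichoose]

lemma natCard_sigma {ι : Type*} [Fintype ι] (f : ι → Type*) [∀ i, Finite (f i)] :
    Nat.card (Σ i, f i) = ∑ i, Nat.card (f i) := by
  have : ∀ i, Fintype (f i) := fun i => Fintype.ofFinite _
  simp [Nat.card_eq_fintype_card]

/-! ### The orbit quotient -/

variable {n : ℕ} (σ : Equiv.Perm (Fin n))

/-- The setoid of the "same cycle" relation. -/
def orbSetoid : Setoid (Fin n) :=
  ⟨σ.SameCycle, ⟨fun x => Equiv.Perm.SameCycle.refl σ x, fun h => h.symm,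
    fun h1 h2 => h1.trans h2⟩⟩

/-- The set of orbits (cycles and fixed points) of `σ`. -/
abbrev Orb := Quotient (orbSetoid σ)

instance : DecidableEq (Orb σ) := fun a b =>
  Quotient.recOnSubsingleton₂ a b fun x y =>
    decidable_of_iff (σ.SameCycle x y)
      ⟨fun h => Quotient.sound (h : (orbSetoid σ).r x y), fun h => Quotient.exact h⟩

noncomputable instance : Fintype (Orb σ) :=
  Fintype.ofSurjective (Quotient.mk (orbSetoid σ)) (fun q => ⟨q.out, q.out_eq⟩)

lemma orb_eq_iff {x y : Fin n} :
    (Quotient.mk (orbSetoid σ) x = Quotient.mk (orbSetoid σ) y) ↔ σ.SameCycle x y := by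
  constructor
  · intro h
    exact Quotient.exact h
  · intro h
    exact Quotient.sound (h : (orbSetoid σ).r x y)

lemma out_sameCycle (x : Fin n) :
    σ.SameCycle (Quotient.mk (orbSetoid σ) x).out x := by
  have := Quotient.exact (Quotient.out_eq (Quotient.mk (orbSetoid σ) x))
  exact (this : (orbSetoid σ).r _ x)

lemma pow_invariant {f : Fin n → ℕ} (hf : ∀ x, f (σ x) = f x) (i : ℕ) :
    ∀ x, f ((σ ^ i) x) = f x := by
  induction i with
  | zero => simp
  | succ i ih =>
    intro x
    rw [pow_succ, Equiv.Perm.mul_apply, ih (σ x), hf]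

lemma const_of_invariant {f : Fin n → ℕ} (hf : ∀ x, f (σ x) = f x) {x y : Fin n}
    (h : σ.SameCycle x y) : f x = f y := by
  obtain ⟨i, -, rfl⟩ := h.exists_pow_eq'
  exact (pow_invariant σ hf i x).symm

/-- The fiber of an orbit, as a finset. -/
def wtF (q : Orb σ) : Finset (Fin n) :=
  Finset.univ.filter (fun x => Quotient.mk (orbSetoid σ) x = q)

/-- The size of an orbit. -/
def wt (q : Orb σ) : ℕ := (wtF σ q).card

lemma mem_wtF {q : Orb σ} {x : Fin n} :
    x ∈ wtF σ q ↔ Quotient.mk (orbSetoid σ) x = q := by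
  simp [wtF]

lemma out_mem_wtF (q : Orb σ) : q.out ∈ wtF σ q := by
  rw [mem_wtF, Quotient.out_eq]

lemma wt_pos (q : Orb σ) : 0 < wt σ q :=
  Finset.card_pos.mpr ⟨q.out, out_mem_wtF σ q⟩

lemma wt_le (q : Orb σ) : wt σ q ≤ n := by
  have h : (wtF σ q).card ≤ (Finset.univ : Finset (Fin n)).card :=
    Finset.card_le_card (Finset.subset_univ _)
  simpa [wt] using h

lemma wtF_mk_fixed {x : Fin n} (hx : σ x = x) :
    wtF σ (Quotient.mk (orbSetoid σ) x) = {x} := by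
  ext y
  rw [mem_wtF, orb_eq_iff, Finset.mem_singleton]
  constructor
  · intro h
    obtain ⟨i, -, rfl⟩ := h.symm.exists_pow_eq'
    exact Equiv.Perm.pow_apply_eq_self_of_apply_eq_self hx i
  · rintro rfl
    exact Equiv.Perm.SameCycle.refl σ _

lemma wtF_mk_nonfixed {x : Fin n} (hx : σ x ≠ x) :
    wtF σ (Quotient.mk (orbSetoid σ) x) = (σ.cycleOf x).support := by
  ext y
  rw [mem_wtF, orb_eq_iff, Equiv.Perm.mem_support_cycleOf_iff,
    and_iff_left (Equiv.Perm.mem_support.mpr hx)]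
  exact ⟨fun h => h.symm, fun h => h.symm⟩

lemma wt_mk_fixed {x : Fin n} (hx : σ x = x) :
    wt σ (Quotient.mk (orbSetoid σ) x) = 1 := by
  show (wtF σ _).card = 1
  rw [wtF_mk_fixed σ hx, Finset.card_singleton]

lemma wt_mk_nonfixed {x : Fin n} (hx : σ x ≠ x) :
    wt σ (Quotient.mk (orbSetoid σ) x) = (σ.cycleOf x).support.card := by
  show (wtF σ _).card = _
  rw [wtF_mk_nonfixed σ hx]

lemma wt_out_eq (q : Orb σ) : wt σ (Quotient.mk (orbSetoid σ) q.out) = wt σ q := by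
  rw [Quotient.out_eq]

lemma wt_eq_one_iff (q : Orb σ) : wt σ q = 1 ↔ σ q.out = q.out := by
  constructor
  · intro h
    by_contra hx
    have h2 : 2 ≤ (σ.cycleOf q.out).support.card :=
      Equiv.Perm.two_le_card_support_cycleOf_iff.mpr hx
    rw [← wt_out_eq σ q, wt_mk_nonfixed σ hx] at h
    omega
  · intro h
    rw [← wt_out_eq σ q, wt_mk_fixed σ h]

lemma nonfixed_of_wt_ne_one {q : Orb σ} (h : wt σ q ≠ 1) : σ q.out ≠ q.out :=
  fun hfix => h ((wt_eq_one_iff σ q).mpr hfix)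

/-- Orbits of size 1 are the fixed points. -/
noncomputable def orbOneEquiv : {q : Orb σ // wt σ q = 1} ≃ {x : Fin n // σ x = x} where
  toFun q := ⟨q.1.out, (wt_eq_one_iff σ q.1).mp q.2⟩
  invFun x := ⟨Quotient.mk _ x.1, wt_mk_fixed σ x.2⟩
  left_inv q := Subtype.ext (Quotient.out_eq q.1)
  right_inv x := by
    refine Subtype.ext ?_
    obtain ⟨j, -, hj⟩ := (out_sameCycle σ x.1).symm.exists_pow_eq'
    show (Quotient.mk (orbSetoid σ) x.1).out = x.1
    rw [← hj]
    exact Equiv.Perm.pow_apply_eq_self_of_apply_eq_self x.2 j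

lemma natCard_wt_one : Nat.card {q : Orb σ // wt σ q = 1} = fixCount σ := by
  rw [Nat.card_congr (orbOneEquiv σ), Nat.card_eq_fintype_card]
  rfl

/-- Orbits of size `ℓ ≥ 2` are the cycles of length `ℓ`. -/
noncomputable def orbCycleEquiv (ℓ : ℕ) (hℓ : 2 ≤ ℓ) :
    {q : Orb σ // wt σ q = ℓ} ≃
      {c : Equiv.Perm (Fin n) // c ∈ σ.cycleFactorsFinset ∧ c.support.card = ℓ} where
  toFun q :=
    ⟨σ.cycleOf q.1.out, by
      have hx : σ q.1.out ≠ q.1.out := nonfixed_of_wt_ne_one σ (by omega)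
      refine ⟨Equiv.Perm.cycleOf_mem_cycleFactorsFinset_iff.mpr
        (Equiv.Perm.mem_support.mpr hx), ?_⟩
      have hq := q.2
      rw [← wt_out_eq σ q.1, wt_mk_nonfixed σ hx] at hq
      exact hq⟩
  invFun c :=
    ⟨Quotient.mk _ ((c.1.support.min' (by rw [← Finset.card_pos, c.2.2]; omega))), by
      set hne : c.1.support.Nonempty := by rw [← Finset.card_pos, c.2.2]; omega
      have hmem := c.1.support.min'_mem hne
      have hc := Equiv.Perm.cycle_is_cycleOf hmem c.2.1
      have hx : σ (c.1.support.min' hne) ≠ c.1.support.min' hne := by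
        intro h
        have hmm := Equiv.Perm.mem_support.mp hmem
        rw [(Equiv.Perm.mem_cycleFactorsFinset_iff.mp c.2.1).2 _ hmem] at hmm
        exact hmm h
      rw [wt_mk_nonfixed σ hx, ← hc, c.2.2]⟩
  left_inv q := by
    refine Subtype.ext ?_
    have hx : σ q.1.out ≠ q.1.out := nonfixed_of_wt_ne_one σ (by omega)
    have hne : (σ.cycleOf q.1.out).support.Nonempty :=
      Equiv.Perm.support_cycleOf_nonempty.mpr hx
    have hmem := (σ.cycleOf q.1.out).support.min'_mem hne
    have hs : σ.SameCycle q.1.out ((σ.cycleOf q.1.out).support.min' hne) :=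
      (Equiv.Perm.mem_support_cycleOf_iff.mp hmem).1
    show Quotient.mk (orbSetoid σ) _ = q.1
    conv_rhs => rw [← Quotient.out_eq q.1]
    exact Quotient.sound hs.symm
  right_inv c := by
    refine Subtype.ext ?_
    set hne : c.1.support.Nonempty := by rw [← Finset.card_pos, c.2.2]; omega
    have hmem := c.1.support.min'_mem hne
    have hc := Equiv.Perm.cycle_is_cycleOf hmem c.2.1
    have hs := out_sameCycle σ (c.1.support.min' hne)
    show σ.cycleOf _ = c.1
    rw [hs.cycleOf_eq, ← hc]

lemma natCard_wt_eq (ℓ : ℕ) (hℓ : 1 ≤ ℓ) :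
    Nat.card {q : Orb σ // wt σ q = ℓ} = cycleCount σ ℓ := by
  rcases eq_or_lt_of_le hℓ with h | h
  · rw [← h, natCard_wt_one, cycleCount, if_pos rfl]
  · rw [Nat.card_congr (orbCycleEquiv σ ℓ h), Nat.card_eq_fintype_card,
      cycleCount, if_neg (by omega), Fintype.card_subtype]
    congr 1
    ext c
    simp [Finset.mem_filter, and_comm]

end SymPowAux

open SymPowAux

/-- The number of fixed points of `σ^{⊙k}` for an arbitrary permutation `σ`, as a sum over all
tuples `(s 0, …, s (n-1))` of natural numbers with `∑ (i+1) * s i = k` of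
`∏ multichoose (C_{i+1}(σ)) (s i)`. -/
theorem fixCount_symPow_general (n k : ℕ) (hn : 0 < n) (hk : 0 < k)
    (σ : Equiv.Perm (Fin n)) :
    fixCount (σ.symPow k) =
      ∑ s ∈ (Fintype.piFinset fun _ : Fin n => Finset.range (k + 1)).filter
          (fun s => ∑ i : Fin n, ((i : ℕ) + 1) * s i = k),
        ∏ i : Fin n, Nat.multichoose (cycleCount σ ((i : ℕ) + 1)) (s i) := by
  classical
  -- Step 1: fixed symmetric powers correspond to invariant count functions.
  have E1 : {m : Sym (Fin n) k // σ.symPow k m = m} ≃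
      {f : Fin n → ℕ // (∀ x, f (σ x) = f x) ∧ ∑ x : Fin n, f x = k} := by
    refine ⟨fun m => ⟨fun x => Multiset.count x (m.1 : Multiset (Fin n)), ?_, ?_⟩,
      fun f => ⟨⟨toMul f.1, by rw [card_toMul, f.2.2]⟩, ?_⟩, fun m => ?_, fun f => ?_⟩
    · -- invariance of counts
      intro x
      have hm : Multiset.map σ (m.1 : Multiset (Fin n)) = (m.1 : Multiset (Fin n)) := by
        have := congrArg (fun s : Sym (Fin n) k => (s : Multiset (Fin n))) m.2
        simpa [Equiv.Perm.symPow, Sym.equivCongr, Sym.coe_map] using this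
      show Multiset.count (σ x) (m.1 : Multiset (Fin n)) =
        Multiset.count x (m.1 : Multiset (Fin n))
      conv_lhs => rw [← hm]
      exact Multiset.count_map_eq_count' σ _ σ.injective x
    · -- total count
      rw [sum_count]
      exact m.1.2
    · -- invariant functions give fixed multisets
      apply Sym.coe_injective
      have h1 : ((σ.symPow k) ⟨toMul f.1, by rw [card_toMul, f.2.2]⟩ : Multiset (Fin n)) =
          Multiset.map σ (toMul f.1) := by
        simp [Equiv.Perm.symPow, Sym.equivCongr, Sym.coe_map]
      rw [h1]
      show Multiset.map σ (toMul f.1) = toMul f.1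
      ext x
      rw [count_toMul]
      conv_lhs => rw [show x = σ (σ.symm x) from (Equiv.apply_symm_apply σ x).symm]
      rw [Multiset.count_map_eq_count' σ _ σ.injective, count_toMul]
      have h2 := f.2.1 (σ.symm x)
      simp only [Equiv.apply_symm_apply] at h2
      exact h2.symm
    · refine Subtype.ext (Sym.coe_injective ?_)
      show toMul (fun x => Multiset.count x (m.1 : Multiset (Fin n))) =
        (m.1 : Multiset (Fin n))
      exact toMul_count _
    · exact Subtype.ext (funext fun x => count_toMul _ x)
  -- Step 2: invariant functions correspond to functions on orbits.
  have sum_fiber : ∀ (F : Fin n → ℕ),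
      ∑ q : Orb σ, ∑ x ∈ wtF σ q, F x = ∑ x : Fin n, F x := by
    intro F
    rw [show (∑ q : Orb σ, ∑ x ∈ wtF σ q, F x) =
        ∑ q ∈ Finset.univ, ∑ x ∈ Finset.univ.filter
          (fun x => Quotient.mk (orbSetoid σ) x = q), F x from rfl,
      Finset.sum_fiberwise_eq_sum_filter]
    simp
  have E2 : {f : Fin n → ℕ // (∀ x, f (σ x) = f x) ∧ ∑ x : Fin n, f x = k} ≃
      {g : Orb σ → ℕ // ∑ q : Orb σ, wt σ q * g q = k} := by
    refine ⟨fun f => ⟨fun q => f.1 q.out, ?_⟩,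
      fun g => ⟨fun x => g.1 (Quotient.mk _ x), ?_, ?_⟩, fun f => ?_, fun g => ?_⟩
    · -- sum condition
      refine Eq.trans ?_ f.2.2
      rw [← sum_fiber f.1]
      refine Finset.sum_congr rfl fun q _ => ?_
      have hconst : ∀ x ∈ wtF σ q, f.1 x = f.1 q.out := fun x hx =>
        const_of_invariant σ f.2.1
          ((orb_eq_iff σ).mp (((mem_wtF σ).mp hx).trans (Quotient.out_eq q).symm))
      rw [Finset.sum_congr rfl hconst, Finset.sum_const, smul_eq_mul]
      rfl
    · intro x
      refine congrArg g.1 ?_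
      exact (orb_eq_iff σ).mpr
        (Equiv.Perm.sameCycle_apply_right.mpr (Equiv.Perm.SameCycle.refl σ x)).symm
    · refine Eq.trans ?_ g.2
      rw [← sum_fiber (fun x => g.1 (Quotient.mk _ x))]
      refine Finset.sum_congr rfl fun q _ => ?_
      have hconst : ∀ x ∈ wtF σ q, g.1 (Quotient.mk (orbSetoid σ) x) = g.1 q := fun x hx => by
        rw [(mem_wtF σ).mp hx]
      rw [Finset.sum_congr rfl hconst, Finset.sum_const, smul_eq_mul]
      rfl
    · refine Subtype.ext (funext fun x => ?_)
      exact const_of_invariant σ f.2.1 (out_sameCycle σ x)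
    · exact Subtype.ext (funext fun q => by simp)
  -- classifier of orbits by size
  let cl : Orb σ → Fin n := fun q => ⟨wt σ q - 1, by
    have := wt_pos σ q; have := wt_le σ q; omega⟩
  have wt_cl : ∀ q, wt σ q = (cl q : ℕ) + 1 := fun q => by
    have := wt_pos σ q; simp only [cl]; omega
  have cl_eq_iff : ∀ (q : Orb σ) (i : Fin n), cl q = i ↔ wt σ q = (i : ℕ) + 1 := by
    intro q i
    rw [Fin.ext_iff]
    have := wt_pos σ q
    simp only [cl]
    omega
  -- fiber sums
  let Φ : (Orb σ → ℕ) → (Fin n → ℕ) := fun g i => ∑ q ∈ Finset.univ.filter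
    (fun q => cl q = i), g q
  have claimA : ∀ g : Orb σ → ℕ,
      ∑ i : Fin n, ((i : ℕ) + 1) * Φ g i = ∑ q : Orb σ, wt σ q * g q := by
    intro g
    have h1 : ∀ i : Fin n, ((i : ℕ) + 1) * Φ g i =
        ∑ q ∈ Finset.univ.filter (fun q => cl q = i), wt σ q * g q := by
      intro i
      rw [show Φ g i = ∑ q ∈ Finset.univ.filter (fun q => cl q = i), g q from rfl,
        Finset.mul_sum]
      refine Finset.sum_congr rfl fun q hq => ?_
      rw [wt_cl q, (Finset.mem_filter.mp hq).2]
    rw [Finset.sum_congr rfl (fun i _ => h1 i), Finset.sum_fiberwise_eq_sum_filter]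
    simp
  set S : Finset (Fin n → ℕ) := (Fintype.piFinset fun _ : Fin n => Finset.range (k + 1)).filter
      (fun s => ∑ i : Fin n, ((i : ℕ) + 1) * s i = k) with hS
  have memS : ∀ g : Orb σ → ℕ, (∑ q : Orb σ, wt σ q * g q = k) → Φ g ∈ S := by
    intro g hg
    rw [hS, Finset.mem_filter]
    refine ⟨?_, by rw [claimA g, hg]⟩
    rw [Fintype.mem_piFinset]
    intro i
    rw [Finset.mem_range, Nat.lt_succ_iff]
    calc Φ g i ≤ ((i : ℕ) + 1) * Φ g i := Nat.le_mul_of_pos_left _ (by omega)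
      _ ≤ ∑ j : Fin n, ((j : ℕ) + 1) * Φ g j :=
          Finset.single_le_sum (f := fun j : Fin n => ((j : ℕ) + 1) * Φ g j)
            (fun j _ => Nat.zero_le _) (Finset.mem_univ i)
      _ = k := by rw [claimA g, hg]
  -- Step 3: decompose by fiber sums.
  have E3 : {g : Orb σ → ℕ // ∑ q : Orb σ, wt σ q * g q = k} ≃
      Σ s : {s : Fin n → ℕ // s ∈ S}, {g : Orb σ → ℕ // Φ g = s.1} := by
    refine (Equiv.subtypeEquivRight (q := fun g : Orb σ → ℕ => Φ g ∈ S) ?_).trans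
      (Equiv.sigmaSubtypeFiberEquivSubtype Φ (p := fun g : Orb σ → ℕ => Φ g ∈ S)
        (fun g => Iff.rfl)).symm
    intro g
    constructor
    · exact memS g
    · intro h
      rw [← claimA g]
      exact (Finset.mem_filter.mp h).2
  -- Step 4: per fiber-sum tuple, product structure.
  have E4 : ∀ s : Fin n → ℕ, {g : Orb σ → ℕ // Φ g = s} ≃
      Π i : Fin n, {h : {q : Orb σ // cl q = i} → ℕ // ∑ q, h q = s i} := by
    intro s
    have hsum : ∀ (g : Orb σ → ℕ) (i : Fin n),
        (∑ q : {q : Orb σ // cl q = i}, g q.1) = Φ g i := by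
      intro g i
      exact (Finset.sum_subtype _ (fun q => by simp) g).symm
    refine ⟨fun g => fun i => ⟨fun q => g.1 q.1, by rw [hsum g.1 i, g.2]⟩,
      fun h => ⟨fun q => (h (cl q)).1 ⟨q, rfl⟩, ?_⟩, fun g => ?_, fun h => ?_⟩
    · funext i
      rw [← hsum]
      have h2 : ∀ q : {q : Orb σ // cl q = i},
          (h (cl q.1)).1 ⟨q.1, rfl⟩ = (h i).1 q := by
        rintro ⟨q, rfl⟩
        rfl
      rw [Finset.sum_congr rfl (fun q _ => h2 q)]
      exact (h i).2
    · exact Subtype.ext (funext fun q => rfl)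
    · funext i
      refine Subtype.ext (funext fun q => ?_)
      obtain ⟨q, rfl⟩ := q
      rfl
  have hfinite : ∀ s : Fin n → ℕ, Finite {g : Orb σ → ℕ // Φ g = s} := by
    intro s
    have : ∀ i : Fin n, Finite {h : {q : Orb σ // cl q = i} → ℕ // ∑ q, h q = s i} :=
      fun i => Finite.of_equiv _ (funSymEquiv (s i)).symm
    exact Finite.of_equiv _ (E4 s).symm
  -- Put everything together.
  rw [show fixCount (σ.symPow k) = Nat.card {m : Sym (Fin n) k // σ.symPow k m = m} from
    (Nat.card_eq_fintype_card).symm]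
  rw [Nat.card_congr (E1.trans (E2.trans E3))]
  rw [natCard_sigma]
  rw [← Finset.sum_coe_sort S]
  refine Finset.sum_congr rfl fun s _ => ?_
  rw [Nat.card_congr (E4 s.1), Nat.card_pi]
  refine Finset.prod_congr rfl fun i _ => ?_
  rw [natCard_sum_eq, ← Nat.card_eq_fintype_card]
  congr 1
  rw [Nat.card_congr (Equiv.subtypeEquivRight (fun q => cl_eq_iff q i))]
  exact natCard_wt_eq σ ((i : ℕ) + 1) (by omega)
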